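/- Under the standing assumptions on the 3-block Bregman ADMM, for every k ≥ 1 the iterates satisfy L_α(w^{k+1}) ≤ L_α(w^k) + ( 2(ℓ_h+ℓ₃)²/(ασ_C) − μ₃/2 )‖z^{k+1}−z^k‖² + ( 2ℓ₃²/(ασ_C) )‖z^k−z^{k−1}‖² − (μ₁/2)‖x^{k+1}−x^k‖² − (μ₂/2)‖y^{k+1}−y^k‖². -/

import Mathlib

open RealInnerProductSpace Filter

noncomputable section

/-- Euclidean space `ℝ^n`. -/
abbrev Eu (n : ℕ) := EuclideanSpace ℝ (Fin n)

/-- The Bregman distance `Δ_φ(u,v) = φ(u) − φ(v) − ⟨∇φ(v), u−v⟩` associated with a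
differentiable function `φ` whose gradient is `φ'`. -/
def Breg {n : ℕ} (φ : Eu n → ℝ) (φ' : Eu n → Eu n) (u v : Eu n) : ℝ :=
  φ u - φ v - ⟪φ' v, u - v⟫

/-- `F` is `μ`-strongly convex iff `F − (μ/2)‖·‖²` is convex. -/
def StrongConvex {n : ℕ} (μ : ℝ) (F : Eu n → ℝ) : Prop :=
  ConvexOn ℝ Set.univ (fun u => F u - μ / 2 * ‖u‖ ^ 2)

/-- The augmented Lagrangian
`L_α(x,y,z,p) = f(x)+g(y)+h(z)+⟨p, Ax+By+Cz⟩+(α/2)‖Ax+By+Cz‖²`. -/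
def Lag {n₁ n₂ n₃ m : ℕ} (f : Eu n₁ → ℝ) (g : Eu n₂ → ℝ) (h : Eu n₃ → ℝ)
    (A : Eu n₁ →L[ℝ] Eu m) (B : Eu n₂ →L[ℝ] Eu m) (C : Eu n₃ →L[ℝ] Eu m)
    (α : ℝ) (x : Eu n₁) (y : Eu n₂) (z : Eu n₃) (p : Eu m) : ℝ :=
  f x + g y + h z + ⟪p, A x + B y + C z⟫ + α / 2 * ‖A x + B y + C z‖ ^ 2

/-- All the data and standing assumptions of the 3-block Bregman ADMM:
objective functions `f, g, h`, Bregman kernels `φ₁, φ₂, φ₃` (with gradients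
`φ₁', φ₂', φ₃'`, and `h'` the gradient of `h`), matrices `A, B, C` (as linear maps),
parameters, iterate sequences `x, y, z, p`, and the standing hypotheses
(lower semicontinuity of `f, g`; differentiability with Lipschitz gradients;
convexity of kernels; the strong-convexity alternatives; quantitative full row rank
of `C`; the lower bound on `α`; and the BADMM update rules, where each of the three
primal updates is a global minimizer of the corresponding subproblem). -/
structure BADMM (n₁ n₂ n₃ m : ℕ) where
  f : Eu n₁ → ℝ
  g : Eu n₂ → ℝ
  h : Eu n₃ → ℝ
  φ₁ : Eu n₁ → ℝ
  φ₂ : Eu n₂ → ℝ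
  φ₃ : Eu n₃ → ℝ
  h' : Eu n₃ → Eu n₃
  φ₁' : Eu n₁ → Eu n₁
  φ₂' : Eu n₂ → Eu n₂
  φ₃' : Eu n₃ → Eu n₃
  A : Eu n₁ →L[ℝ] Eu m
  B : Eu n₂ →L[ℝ] Eu m
  C : Eu n₃ →L[ℝ] Eu m
  α : ℝ
  ℓh : ℝ
  ℓ₁ : ℝ
  ℓ₂ : ℝ
  ℓ₃ : ℝ
  μ₁ : ℝ
  μ₂ : ℝ
  μ₃ : ℝ
  σC : ℝ
  x : ℕ → Eu n₁
  y : ℕ → Eu n₂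
  z : ℕ → Eu n₃
  p : ℕ → Eu m
  hα_pos : 0 < α
  hf_lsc : LowerSemicontinuous f
  hg_lsc : LowerSemicontinuous g
  hgrad_h : ∀ v, HasGradientAt h (h' v) v
  hgrad_φ₁ : ∀ v, HasGradientAt φ₁ (φ₁' v) v
  hgrad_φ₂ : ∀ v, HasGradientAt φ₂ (φ₂' v) v
  hgrad_φ₃ : ∀ v, HasGradientAt φ₃ (φ₃' v) v
  hℓh_nonneg : 0 ≤ ℓh
  hℓ₁_nonneg : 0 ≤ ℓ₁
  hℓ₂_nonneg : 0 ≤ ℓ₂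
  hℓ₃_nonneg : 0 ≤ ℓ₃
  hlip_h : ∀ a b, ‖h' a - h' b‖ ≤ ℓh * ‖a - b‖
  hlip_φ₁ : ∀ a b, ‖φ₁' a - φ₁' b‖ ≤ ℓ₁ * ‖a - b‖
  hlip_φ₂ : ∀ a b, ‖φ₂' a - φ₂' b‖ ≤ ℓ₂ * ‖a - b‖
  hlip_φ₃ : ∀ a b, ‖φ₃' a - φ₃' b‖ ≤ ℓ₃ * ‖a - b‖
  hφ₁_convex : ConvexOn ℝ Set.univ φ₁
  hφ₂_convex : ConvexOn ℝ Set.univ φ₂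
  hφ₃_convex : ConvexOn ℝ Set.univ φ₃
  hμ₁_pos : 0 < μ₁
  hμ₂_pos : 0 < μ₂
  hμ₃_pos : 0 < μ₃
  hsc₁ : StrongConvex μ₁ f ∨ StrongConvex μ₁ φ₁
  hsc₂ : StrongConvex μ₂ g ∨ StrongConvex μ₂ φ₂
  hsc₃ : StrongConvex μ₃ h ∨ StrongConvex μ₃ φ₃
  hσC_pos : 0 < σC
  hC_rank : ∀ u : Eu m, σC * ‖u‖ ^ 2 ≤ ‖(ContinuousLinearMap.adjoint C) u‖ ^ 2
  hα_large : 4 * ((ℓh + ℓ₃) ^ 2 + ℓ₃ ^ 2) / (μ₃ * σC) < α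
  hx_min : ∀ k, ∀ ξ : Eu n₁,
    Lag f g h A B C α (x (k+1)) (y k) (z k) (p k) + Breg φ₁ φ₁' (x (k+1)) (x k) ≤
      Lag f g h A B C α ξ (y k) (z k) (p k) + Breg φ₁ φ₁' ξ (x k)
  hy_min : ∀ k, ∀ ξ : Eu n₂,
    Lag f g h A B C α (x (k+1)) (y (k+1)) (z k) (p k) + Breg φ₂ φ₂' (y (k+1)) (y k) ≤
      Lag f g h A B C α (x (k+1)) ξ (z k) (p k) + Breg φ₂ φ₂' ξ (y k)
  hz_min : ∀ k, ∀ ξ : Eu n₃,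
    Lag f g h A B C α (x (k+1)) (y (k+1)) (z (k+1)) (p k) + Breg φ₃ φ₃' (z (k+1)) (z k) ≤
      Lag f g h A B C α (x (k+1)) (y (k+1)) ξ (p k) + Breg φ₃ φ₃' ξ (z k)
  hp_upd : ∀ k, p (k+1) = p k + α • (A (x (k+1)) + B (y (k+1)) + C (z (k+1)))

namespace BADMM

variable {n₁ n₂ n₃ m : ℕ} (P : BADMM n₁ n₂ n₃ m)

/-- `σ₀ = 2ℓ₃²/(ασ_C)`. -/
def σ0 : ℝ := 2 * P.ℓ₃ ^ 2 / (P.α * P.σC)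

/-- `σ₁ = (1/2)·min(μ₁, μ₂, μ₃ − 4(ℓ_h+ℓ₃)²/(ασ_C) − 4ℓ₃²/(ασ_C))`. -/
def σ1 : ℝ :=
  (1 / 2) * min P.μ₁ (min P.μ₂
    (P.μ₃ - 4 * (P.ℓh + P.ℓ₃) ^ 2 / (P.α * P.σC) - 4 * P.ℓ₃ ^ 2 / (P.α * P.σC)))

/-- The augmented Lagrangian of the problem, `L_α`. -/
def L (x : Eu n₁) (y : Eu n₂) (z : Eu n₃) (p : Eu m) : ℝ :=
  Lag P.f P.g P.h P.A P.B P.C P.α x y z p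

/-- `L̂(x,y,z,p,ẑ) = L_α(x,y,z,p) + σ₀‖z−ẑ‖²`. -/
def Lhat (x : Eu n₁) (y : Eu n₂) (z : Eu n₃) (p : Eu m) (zh : Eu n₃) : ℝ :=
  P.L x y z p + P.σ0 * ‖z - zh‖ ^ 2

/-- `‖w^{k+1}−w^k‖²`. -/
def dw2 (k : ℕ) : ℝ :=
  ‖P.x (k+1) - P.x k‖ ^ 2 + ‖P.y (k+1) - P.y k‖ ^ 2 +
    ‖P.z (k+1) - P.z k‖ ^ 2 + ‖P.p (k+1) - P.p k‖ ^ 2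

end BADMM


section AuxLemmas
open InnerProductSpace
variable {n m' : ℕ}

lemma hga_of_fderiv {f : Eu n → ℝ} {D : Eu n →L[ℝ] ℝ} {G x : Eu n}
    (hD : HasFDerivAt f D x) (hDG : ∀ v, D v = ⟪G, v⟫) : HasGradientAt f G x := by
  have h : InnerProductSpace.toDual ℝ (Eu n) G = D := by
    ext v; rw [InnerProductSpace.toDual_apply_apply, hDG v]
  rw [hasGradientAt_iff_hasFDerivAt, h]; exact hD

lemma hga_const (c : ℝ) (x : Eu n) : HasGradientAt (fun _ => c) (0 : Eu n) x :=
  hga_of_fderiv (hasFDerivAt_const c x) (by intro v; simp only [ContinuousLinearMap.zero_apply, inner_zero_left])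

lemma HasGradientAt.add'' {f g : Eu n → ℝ} {a b x : Eu n}
    (hf : HasGradientAt f a x) (hg : HasGradientAt g b x) :
    HasGradientAt (fun t => f t + g t) (a + b) x :=
  hga_of_fderiv (hf.hasFDerivAt.add hg.hasFDerivAt)
    (by intro v
        simp only [ContinuousLinearMap.add_apply, InnerProductSpace.toDual_apply_apply,
          inner_add_left])

lemma HasGradientAt.sub'' {f g : Eu n → ℝ} {a b x : Eu n}
    (hf : HasGradientAt f a x) (hg : HasGradientAt g b x) :
    HasGradientAt (fun t => f t - g t) (a - b) x :=
  hga_of_fderiv (hf.hasFDerivAt.sub hg.hasFDerivAt)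
    (by intro v
        simp only [ContinuousLinearMap.sub_apply, InnerProductSpace.toDual_apply_apply,
          inner_sub_left])

lemma HasGradientAt.cmul'' {f : Eu n → ℝ} {a x : Eu n} (c : ℝ)
    (hf : HasGradientAt f a x) :
    HasGradientAt (fun t => c * f t) (c • a) x :=
  hga_of_fderiv (hf.hasFDerivAt.const_mul c)
    (by intro v
        simp only [ContinuousLinearMap.smul_apply, InnerProductSpace.toDual_apply_apply,
          real_inner_smul_left, smul_eq_mul])

lemma hga_inner (a x : Eu n) : HasGradientAt (fun t => ⟪a, t⟫) a x := by
  have h := (InnerProductSpace.toDual ℝ (Eu n) a).hasFDerivAt (x := x)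
  exact hga_of_fderiv h (by intro v; rw [InnerProductSpace.toDual_apply_apply])

lemma hga_sq (C : Eu n →L[ℝ] Eu m') (w : Eu m') (ζ : Eu n) :
    HasGradientAt (fun z => ‖w + C z‖ ^ 2)
      ((2:ℝ) • (ContinuousLinearMap.adjoint C) (w + C ζ)) ζ := by
  have haff : HasFDerivAt (fun z : Eu n => w + C z) C ζ := C.hasFDerivAt.const_add w
  have hinner := haff.inner ℝ haff
  have hfun : (fun z : Eu n => ‖w + C z‖ ^ 2) = fun z => ⟪w + C z, w + C z⟫ :=
    funext fun z => (real_inner_self_eq_norm_sq _).symm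
  rw [hfun]
  refine hga_of_fderiv hinner ?_
  intro v
  simp only [ContinuousLinearMap.comp_apply, ContinuousLinearMap.prod_apply,
    fderivInnerCLM_apply, real_inner_smul_left, ContinuousLinearMap.adjoint_inner_left]
  rw [real_inner_comm (C v)]
  ring

lemma convexOn_inner_right (a : Eu n) : ConvexOn ℝ Set.univ (fun x : Eu n => ⟪a, x⟫) := by
  refine ⟨convex_univ, ?_⟩
  intro x _ y _ s t hs ht hst
  simp only [smul_eq_mul, inner_add_right, real_inner_smul_right]
  exact le_of_eq (by ring)

lemma sq_expand (s t : ℝ) (u v : Eu m') :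
    ‖s • u + t • v‖ ^ 2 = s^2*‖u‖^2 + 2*(s*t)*⟪u, v⟫ + t^2*‖v‖^2 := by
  rw [← real_inner_self_eq_norm_sq]
  simp only [inner_add_left, inner_add_right, real_inner_smul_left, real_inner_smul_right,
    real_inner_self_eq_norm_sq]
  rw [norm_smul, norm_smul, mul_pow, mul_pow, Real.norm_eq_abs, Real.norm_eq_abs,
    sq_abs, sq_abs, real_inner_comm v u]
  ring

lemma convexOn_quad (α' : ℝ) (hα : 0 ≤ α') (T : Eu n →L[ℝ] Eu m') (w : Eu m') :
    ConvexOn ℝ Set.univ (fun x : Eu n => α' / 2 * ‖T x + w‖ ^ 2) := by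
  refine ⟨convex_univ, ?_⟩
  intro x _ y _ s t hs ht hst
  have h1 : s • w + t • w = w := by rw [← add_smul, hst, one_smul]
  have hcomb : T (s • x + t • y) + w = s • (T x + w) + t • (T y + w) := by
    rw [map_add, map_smul, map_smul]
    nth_rewrite 1 [← h1]
    rw [smul_add, smul_add]
    abel
  dsimp only
  rw [hcomb, sq_expand]
  simp only [smul_eq_mul]
  have hs1 : s = 1 - t := by linarith
  subst hs1
  have h2 := real_inner_le_norm (T x + w) (T y + w)
  nlinarith [mul_nonneg (mul_nonneg hα (mul_nonneg hs ht))
      (sq_nonneg (‖T x + w‖ - ‖T y + w‖)),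
    mul_nonneg (mul_nonneg hα (mul_nonneg hs ht)) (sub_nonneg.mpr h2)]

lemma convexOn_inner_affine (p w : Eu m') (T : Eu n →L[ℝ] Eu m') :
    ConvexOn ℝ Set.univ (fun x : Eu n => ⟪p, T x + w⟫) := by
  have hfun : (fun x : Eu n => ⟪p, T x + w⟫)
      = fun x => ⟪(ContinuousLinearMap.adjoint T) p, x⟫ + ⟪p, w⟫ := by
    funext x
    rw [inner_add_right, ContinuousLinearMap.adjoint_inner_left]
  rw [hfun]
  exact (convexOn_inner_right _).add (convexOn_const _ convex_univ)

lemma breg_convexOn {φ : Eu n → ℝ} (φ' : Eu n → Eu n) (hφ : ConvexOn ℝ Set.univ φ)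
    (xk : Eu n) : ConvexOn ℝ Set.univ (fun ξ => Breg φ φ' ξ xk) := by
  have hfun : (fun ξ => Breg φ φ' ξ xk)
      = fun ξ => φ ξ + (⟪-φ' xk, ξ⟫ + (-φ xk + ⟪φ' xk, xk⟫)) := by
    funext ξ
    simp only [Breg, inner_sub_right, inner_neg_left]
    ring
  rw [hfun]
  exact hφ.add ((convexOn_inner_right _).add (convexOn_const _ convex_univ))

lemma breg_nonneg {φ : Eu n → ℝ} {φ' : Eu n → Eu n} (hφ : ConvexOn ℝ Set.univ φ)
    (hg : ∀ v, HasGradientAt φ (φ' v) v) (u v : Eu n) : 0 ≤ Breg φ φ' u v := by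
  have hline : HasDerivAt (fun t : ℝ => v + t • (u - v)) (u - v) 0 := by
    simpa using ((hasDerivAt_id (0:ℝ)).smul_const (u - v)).const_add v
  have hg0 : (fun t : ℝ => v + t • (u - v)) 0 = v := by simp
  have hder : HasDerivAt (fun t : ℝ => φ (v + t • (u - v))) ⟪φ' v, u - v⟫ 0 := by
    have h1 := (hg v).hasFDerivAt
    rw [← hg0] at h1
    have := h1.comp_hasDerivAt 0 hline
    simpa [InnerProductSpace.toDual_apply_apply, Function.comp_def] using this
  have hgconv : ConvexOn ℝ Set.univ (fun t : ℝ => φ (v + t • (u - v))) := by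
    have := hφ.comp_affineMap (AffineMap.lineMap v u)
    have hfun : (φ ∘ (AffineMap.lineMap v u : ℝ →ᵃ[ℝ] Eu n))
        = fun t : ℝ => φ (v + t • (u - v)) := by
      funext t
      simp only [Function.comp_apply, AffineMap.lineMap_apply, vsub_eq_sub, vadd_eq_add]
      exact congrArg φ (add_comm _ _)
    rw [hfun] at this
    simpa using this
  have hslope := hgconv.le_slope_of_hasDerivAt (Set.mem_univ (0:ℝ)) (Set.mem_univ (1:ℝ))
    zero_lt_one hder
  have hs : slope (fun t : ℝ => φ (v + t • (u - v))) 0 1 = φ u - φ v := by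
    simp [slope_def_field]
  rw [hs] at hslope
  simp only [Breg]
  linarith

lemma hga_norm_sq (c : ℝ) (w : Eu n) :
    HasGradientAt (fun u : Eu n => c * ‖u‖ ^ 2) ((2 * c) • w) w := by
  have h0 := hga_sq (ContinuousLinearMap.id ℝ (Eu n)) 0 w
  simp only [ContinuousLinearMap.id_apply, zero_add, ContinuousLinearMap.adjoint_id] at h0
  have h1 := h0.cmul'' c
  have : c • ((2:ℝ) • w) = (2 * c) • w := by rw [smul_smul]; ring_nf
  rwa [this] at h1

lemma breg_strong {μ : ℝ} (hμ : 0 ≤ μ) {φ : Eu n → ℝ} {φ' : Eu n → Eu n}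
    (hg : ∀ v, HasGradientAt φ (φ' v) v)
    (hφ : ConvexOn ℝ Set.univ (fun u => φ u - μ / 2 * ‖u‖ ^ 2)) (u v : Eu n) :
    μ / 2 * ‖u - v‖ ^ 2 ≤ Breg φ φ' u v := by
  set ψ : Eu n → ℝ := fun u => φ u - μ / 2 * ‖u‖ ^ 2 with hψ
  set ψ' : Eu n → Eu n := fun w => φ' w - μ • w with hψ'
  have hψg : ∀ w, HasGradientAt ψ (ψ' w) w := by
    intro w
    have := (hg w).sub'' ((hga_norm_sq (μ/2) w))
    have h2 : (2 * (μ/2)) • w = μ • w := by rw [show 2 * (μ/2) = μ by ring]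
    rw [h2] at this
    exact this
  have h0 := breg_nonneg hφ hψg u v
  simp only [Breg, hψ, hψ'] at h0 ⊢
  simp only [inner_sub_left, inner_sub_right, real_inner_smul_left] at h0 ⊢
  rw [real_inner_self_eq_norm_sq] at h0
  have hexp : ‖u - v‖ ^ 2 = ‖u‖ ^ 2 - 2 * ⟪u, v⟫ + ‖v‖ ^ 2 := by
    rw [← real_inner_self_eq_norm_sq]
    simp only [inner_sub_left, inner_sub_right, real_inner_self_eq_norm_sq]
    rw [real_inner_comm v u]; ring
  rw [real_inner_comm u v] at h0
  rw [hexp]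
  linarith [h0]

lemma strong_min {μ : ℝ} (hμ : 0 ≤ μ) {F : Eu n → ℝ}
    (hc : ConvexOn ℝ Set.univ (fun u => F u - μ / 2 * ‖u‖ ^ 2)) {a : Eu n}
    (hmin : ∀ u, F a ≤ F u) (u : Eu n) : F a + μ / 2 * ‖u - a‖ ^ 2 ≤ F u := by
  have hexp : ∀ s t : ℝ, ‖s • a + t • u‖ ^ 2
      = s^2*‖a‖^2 + 2*(s*t)*⟪a, u⟫ + t^2*‖u‖^2 := by
    intro s t
    rw [← real_inner_self_eq_norm_sq]
    simp only [inner_add_left, inner_add_right, real_inner_smul_left, real_inner_smul_right,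
      real_inner_self_eq_norm_sq]
    rw [norm_smul, norm_smul, mul_pow, mul_pow, Real.norm_eq_abs, Real.norm_eq_abs,
      sq_abs, sq_abs, real_inner_comm u a]
    ring
  have hexp2 : ‖u - a‖ ^ 2 = ‖u‖ ^ 2 - 2 * ⟪a, u⟫ + ‖a‖ ^ 2 := by
    rw [← real_inner_self_eq_norm_sq]
    simp only [inner_sub_left, inner_sub_right, real_inner_self_eq_norm_sq]
    rw [real_inner_comm u a]; ring
  have key : ∀ t : ℝ, 0 < t → t < 1 → μ / 2 * ‖u - a‖ ^ 2 * t ≤ F u - F a := by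
    intro t ht ht1
    have hs : (0:ℝ) < 1 - t := by linarith
    have hcv := hc.2 (Set.mem_univ a) (Set.mem_univ u) (le_of_lt ht) (le_of_lt hs)
      (by ring)
    simp only [smul_eq_mul] at hcv
    have hz := hmin (t • a + (1 - t) • u)
    rw [hexp t (1 - t)] at hcv
    rw [hexp2]
    nlinarith [hcv, hz]
  have hc0 : 0 ≤ μ / 2 * ‖u - a‖ ^ 2 := by positivity
  have hcK : μ / 2 * ‖u - a‖ ^ 2 ≤ F u - F a := by
    rcases le_or_gt (μ / 2 * ‖u - a‖ ^ 2) (F u - F a) with h | h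
    · exact h
    · exfalso
      have hK : 0 ≤ F u - F a := by
        have := key (1/2) (by norm_num) (by norm_num)
        linarith
      set c := μ / 2 * ‖u - a‖ ^ 2 with hcdef
      set K := F u - F a with hKdef
      have hcpos : 0 < c := lt_of_le_of_lt hK h
      have ht1 : (0:ℝ) < (K + c) / (2 * c) := by positivity
      have ht2 : (K + c) / (2 * c) < 1 := by
        rw [div_lt_one (by linarith)]; linarith
      have hkey := key _ ht1 ht2
      have h2 : c * ((K + c) / (2 * c)) = (K + c) / 2 := by
        field_simp
      rw [h2] at hkey
      linarith
  linarith

lemma block_descent {μ α' : ℝ} (hμ : 0 < μ) (hα : 0 ≤ α')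
    {F φ : Eu n → ℝ} {φ' : Eu n → Eu n}
    (hφconv : ConvexOn ℝ Set.univ φ) (hgradφ : ∀ v, HasGradientAt φ (φ' v) v)
    (hsc : StrongConvex μ F ∨ StrongConvex μ φ)
    (T : Eu n →L[ℝ] Eu m') (w q : Eu m') (c₀ : ℝ) (xk x₁ : Eu n)
    (hmin : ∀ ξ, F x₁ + c₀ + ⟪q, T x₁ + w⟫ + α' / 2 * ‖T x₁ + w‖ ^ 2 + Breg φ φ' x₁ xk ≤
      F ξ + c₀ + ⟪q, T ξ + w⟫ + α' / 2 * ‖T ξ + w‖ ^ 2 + Breg φ φ' ξ xk) :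
    F x₁ + c₀ + ⟪q, T x₁ + w⟫ + α' / 2 * ‖T x₁ + w‖ ^ 2 + μ / 2 * ‖x₁ - xk‖ ^ 2 ≤
      F xk + c₀ + ⟪q, T xk + w⟫ + α' / 2 * ‖T xk + w‖ ^ 2 := by
  have hbregk : Breg φ φ' xk xk = 0 := by simp [Breg]
  rcases hsc with hsc | hsc
  · have hJconv : ConvexOn ℝ Set.univ
        (fun ξ => (F ξ + c₀ + ⟪q, T ξ + w⟫ + α' / 2 * ‖T ξ + w‖ ^ 2 + Breg φ φ' ξ xk)
          - μ / 2 * ‖ξ‖ ^ 2) := by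
      have hfun : (fun ξ => (F ξ + c₀ + ⟪q, T ξ + w⟫ + α' / 2 * ‖T ξ + w‖ ^ 2
            + Breg φ φ' ξ xk) - μ / 2 * ‖ξ‖ ^ 2)
          = fun ξ => ((((F ξ - μ / 2 * ‖ξ‖ ^ 2) + c₀) + ⟪q, T ξ + w⟫)
            + α' / 2 * ‖T ξ + w‖ ^ 2) + Breg φ φ' ξ xk := by
        funext ξ; ring
      rw [hfun]
      exact (((hsc.add (convexOn_const _ convex_univ)).add (convexOn_inner_affine q w T)).add
        (convexOn_quad α' hα T w)).add (breg_convexOn φ' hφconv xk)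
    have hm := strong_min hμ.le hJconv hmin xk
    have hb := breg_nonneg hφconv hgradφ x₁ xk
    rw [norm_sub_rev] at hm
    rw [hbregk] at hm
    linarith
  · have h1 := hmin xk
    have h2 := breg_strong hμ.le hgradφ hsc x₁ xk
    rw [hbregk] at h1
    linarith


lemma hga_inner_affine (q w : Eu m') (C : Eu n →L[ℝ] Eu m') (ζ : Eu n) :
    HasGradientAt (fun z => ⟪q, w + C z⟫) ((ContinuousLinearMap.adjoint C) q) ζ := by
  have hfun : (fun z : Eu n => ⟪q, w + C z⟫)
      = fun z => ⟪q, w⟫ + ⟪(ContinuousLinearMap.adjoint C) q, z⟫ := by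
    funext z; rw [inner_add_right, ContinuousLinearMap.adjoint_inner_left]
  rw [hfun]
  have h := (hga_const ⟪q, w⟫ ζ).add'' (hga_inner ((ContinuousLinearMap.adjoint C) q) ζ)
  rwa [zero_add] at h

end AuxLemmas

section ZOpt
variable {n₁ n₂ n₃ m : ℕ}

lemma z_first_order (P : BADMM n₁ n₂ n₃ m) (k : ℕ) :
    P.h' (P.z (k+1)) + (ContinuousLinearMap.adjoint P.C) (P.p (k+1)) +
      (P.φ₃' (P.z (k+1)) - P.φ₃' (P.z k)) = 0 := by
  have hg1 : HasGradientAt (fun _ : Eu n₃ => P.f (P.x (k+1)) + P.g (P.y (k+1)))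
      (0 : Eu n₃) (P.z (k+1)) := hga_const _ _
  have hg2 : HasGradientAt P.h (P.h' (P.z (k+1))) (P.z (k+1)) := P.hgrad_h _
  have hg3 := hga_inner_affine (P.p k) (P.A (P.x (k+1)) + P.B (P.y (k+1))) P.C (P.z (k+1))
  have hg4 := (hga_sq P.C (P.A (P.x (k+1)) + P.B (P.y (k+1))) (P.z (k+1))).cmul'' (P.α / 2)
  rw [smul_smul, show P.α / 2 * 2 = P.α by ring] at hg4
  have hg5 : HasGradientAt (fun ζ : Eu n₃ => Breg P.φ₃ P.φ₃' ζ (P.z k))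
      (P.φ₃' (P.z (k+1)) - P.φ₃' (P.z k)) (P.z (k+1)) := by
    have hfun : (fun ζ : Eu n₃ => Breg P.φ₃ P.φ₃' ζ (P.z k))
        = fun ζ => (P.φ₃ ζ - P.φ₃ (P.z k)) - (⟪P.φ₃' (P.z k), ζ⟫ - ⟪P.φ₃' (P.z k), P.z k⟫) := by
      funext ζ; simp only [Breg, inner_sub_right]
    rw [hfun]
    have h := ((P.hgrad_φ₃ (P.z (k+1))).sub'' (hga_const (P.φ₃ (P.z k)) (P.z (k+1)))).sub''
      ((hga_inner (P.φ₃' (P.z k)) (P.z (k+1))).sub'' (hga_const ⟪P.φ₃' (P.z k), P.z k⟫ (P.z (k+1))))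
    simpa only [sub_zero] using h
  have hJ := (((hg1.add'' hg2).add'' hg3).add'' hg4).add'' hg5
  rw [zero_add] at hJ
  have hJ' : HasGradientAt
      (fun ζ : Eu n₃ => Lag P.f P.g P.h P.A P.B P.C P.α (P.x (k+1)) (P.y (k+1)) ζ (P.p k)
        + Breg P.φ₃ P.φ₃' ζ (P.z k))
      (P.h' (P.z (k+1)) + (ContinuousLinearMap.adjoint P.C) (P.p k)
        + P.α • (ContinuousLinearMap.adjoint P.C)
            (P.A (P.x (k+1)) + P.B (P.y (k+1)) + P.C (P.z (k+1)))
        + (P.φ₃' (P.z (k+1)) - P.φ₃' (P.z k))) (P.z (k+1)) := by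
    simp only [Lag]
    exact hJ
  have hloc : IsLocalMin
      (fun ζ : Eu n₃ => Lag P.f P.g P.h P.A P.B P.C P.α (P.x (k+1)) (P.y (k+1)) ζ (P.p k)
        + Breg P.φ₃ P.φ₃' ζ (P.z k)) (P.z (k+1)) :=
    Filter.Eventually.of_forall fun ζ => P.hz_min k ζ
  have hf0 := hloc.hasFDerivAt_eq_zero hJ'.hasFDerivAt
  have hG0 : P.h' (P.z (k+1)) + (ContinuousLinearMap.adjoint P.C) (P.p k)
      + P.α • (ContinuousLinearMap.adjoint P.C)
          (P.A (P.x (k+1)) + P.B (P.y (k+1)) + P.C (P.z (k+1)))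
      + (P.φ₃' (P.z (k+1)) - P.φ₃' (P.z k)) = 0 := by
    have h := congrArg (InnerProductSpace.toDual ℝ (Eu n₃)).symm hf0
    simpa using h
  have hpk : (ContinuousLinearMap.adjoint P.C) (P.p (k+1))
      = (ContinuousLinearMap.adjoint P.C) (P.p k)
        + P.α • (ContinuousLinearMap.adjoint P.C)
            (P.A (P.x (k+1)) + P.B (P.y (k+1)) + P.C (P.z (k+1))) := by
    rw [P.hp_upd k, map_add, map_smul]
  rw [hpk, ← hG0]
  abel

end ZOpt

set_option maxHeartbeats 3200000 in
/-- descent estimate for the augmented Lagrangian along the iterates. -/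
theorem badmm_lagrangian_descent {n₁ n₂ n₃ m : ℕ} (P : BADMM n₁ n₂ n₃ m) :
    ∀ k : ℕ, 1 ≤ k →
      P.L (P.x (k+1)) (P.y (k+1)) (P.z (k+1)) (P.p (k+1)) ≤
        P.L (P.x k) (P.y k) (P.z k) (P.p k) +
          (2 * (P.ℓh + P.ℓ₃) ^ 2 / (P.α * P.σC) - P.μ₃ / 2) * ‖P.z (k+1) - P.z k‖ ^ 2 +
          (2 * P.ℓ₃ ^ 2 / (P.α * P.σC)) * ‖P.z k - P.z (k-1)‖ ^ 2 -
          P.μ₁ / 2 * ‖P.x (k+1) - P.x k‖ ^ 2 -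
          P.μ₂ / 2 * ‖P.y (k+1) - P.y k‖ ^ 2 := by
  intro k hk
  obtain ⟨j, rfl⟩ : ∃ j, k = j + 1 := ⟨k - 1, by omega⟩
  simp only [BADMM.L, Nat.add_sub_cancel]
  -- x block
  have hformx : ∀ ξ : Eu n₁,
      Lag P.f P.g P.h P.A P.B P.C P.α ξ (P.y (j+1)) (P.z (j+1)) (P.p (j+1))
      = P.f ξ + (P.g (P.y (j+1)) + P.h (P.z (j+1)))
        + ⟪P.p (j+1), P.A ξ + (P.B (P.y (j+1)) + P.C (P.z (j+1)))⟫
        + P.α / 2 * ‖P.A ξ + (P.B (P.y (j+1)) + P.C (P.z (j+1)))‖ ^ 2 := by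
    intro ξ
    simp only [Lag]
    rw [add_assoc (P.A ξ)]
    ring
  have hEx := block_descent P.hμ₁_pos P.hα_pos.le P.hφ₁_convex P.hgrad_φ₁ P.hsc₁ P.A
      (P.B (P.y (j+1)) + P.C (P.z (j+1))) (P.p (j+1)) (P.g (P.y (j+1)) + P.h (P.z (j+1)))
      (P.x (j+1)) (P.x (j+1+1)) (fun ξ => by
        have h := P.hx_min (j+1) ξ
        rw [hformx (P.x (j+1+1)), hformx ξ] at h
        exact h)
  rw [← hformx (P.x (j+1+1)), ← hformx (P.x (j+1))] at hEx
  -- y block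
  have hformy : ∀ ξ : Eu n₂,
      Lag P.f P.g P.h P.A P.B P.C P.α (P.x (j+1+1)) ξ (P.z (j+1)) (P.p (j+1))
      = P.g ξ + (P.f (P.x (j+1+1)) + P.h (P.z (j+1)))
        + ⟪P.p (j+1), P.B ξ + (P.A (P.x (j+1+1)) + P.C (P.z (j+1)))⟫
        + P.α / 2 * ‖P.B ξ + (P.A (P.x (j+1+1)) + P.C (P.z (j+1)))‖ ^ 2 := by
    intro ξ
    simp only [Lag]
    rw [show P.A (P.x (j+1+1)) + P.B ξ + P.C (P.z (j+1))
        = P.B ξ + (P.A (P.x (j+1+1)) + P.C (P.z (j+1))) from by abel]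
    ring
  have hEy := block_descent P.hμ₂_pos P.hα_pos.le P.hφ₂_convex P.hgrad_φ₂ P.hsc₂ P.B
      (P.A (P.x (j+1+1)) + P.C (P.z (j+1))) (P.p (j+1)) (P.f (P.x (j+1+1)) + P.h (P.z (j+1)))
      (P.y (j+1)) (P.y (j+1+1)) (fun ξ => by
        have h := P.hy_min (j+1) ξ
        rw [hformy (P.y (j+1+1)), hformy ξ] at h
        exact h)
  rw [← hformy (P.y (j+1+1)), ← hformy (P.y (j+1))] at hEy
  -- z block
  have hformz : ∀ ξ : Eu n₃,
      Lag P.f P.g P.h P.A P.B P.C P.α (P.x (j+1+1)) (P.y (j+1+1)) ξ (P.p (j+1))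
      = P.h ξ + (P.f (P.x (j+1+1)) + P.g (P.y (j+1+1)))
        + ⟪P.p (j+1), P.C ξ + (P.A (P.x (j+1+1)) + P.B (P.y (j+1+1)))⟫
        + P.α / 2 * ‖P.C ξ + (P.A (P.x (j+1+1)) + P.B (P.y (j+1+1)))‖ ^ 2 := by
    intro ξ
    simp only [Lag]
    rw [show P.A (P.x (j+1+1)) + P.B (P.y (j+1+1)) + P.C ξ
        = P.C ξ + (P.A (P.x (j+1+1)) + P.B (P.y (j+1+1))) from by abel]
    ring
  have hEz := block_descent P.hμ₃_pos P.hα_pos.le P.hφ₃_convex P.hgrad_φ₃ P.hsc₃ P.C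
      (P.A (P.x (j+1+1)) + P.B (P.y (j+1+1))) (P.p (j+1)) (P.f (P.x (j+1+1)) + P.g (P.y (j+1+1)))
      (P.z (j+1)) (P.z (j+1+1)) (fun ξ => by
        have h := P.hz_min (j+1) ξ
        rw [hformz (P.z (j+1+1)), hformz ξ] at h
        exact h)
  rw [← hformz (P.z (j+1+1)), ← hformz (P.z (j+1))] at hEz
  -- p step
  have hpdiff : Lag P.f P.g P.h P.A P.B P.C P.α (P.x (j+1+1)) (P.y (j+1+1)) (P.z (j+1+1)) (P.p (j+1+1))
      = Lag P.f P.g P.h P.A P.B P.C P.α (P.x (j+1+1)) (P.y (j+1+1)) (P.z (j+1+1)) (P.p (j+1))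
        + P.α * ‖P.A (P.x (j+1+1)) + P.B (P.y (j+1+1)) + P.C (P.z (j+1+1))‖ ^ 2 := by
    simp only [Lag]
    rw [P.hp_upd (j+1), inner_add_left, real_inner_smul_left, real_inner_self_eq_norm_sq]
    ring
  -- dual bound
  have e1 := z_first_order P (j+1)
  have e0 := z_first_order P j
  have h12 : (P.h' (P.z (j+1+1)) + (ContinuousLinearMap.adjoint P.C) (P.p (j+1+1))
        + (P.φ₃' (P.z (j+1+1)) - P.φ₃' (P.z (j+1))))
      - (P.h' (P.z (j+1)) + (ContinuousLinearMap.adjoint P.C) (P.p (j+1))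
        + (P.φ₃' (P.z (j+1)) - P.φ₃' (P.z j))) = 0 := by
    rw [e1, e0, sub_zero]
  have hsub : (ContinuousLinearMap.adjoint P.C) (P.p (j+1+1))
        - (ContinuousLinearMap.adjoint P.C) (P.p (j+1))
      = -(P.h' (P.z (j+1+1)) - P.h' (P.z (j+1)))
        - (P.φ₃' (P.z (j+1+1)) - P.φ₃' (P.z (j+1)))
        + (P.φ₃' (P.z (j+1)) - P.φ₃' (P.z j)) := by
    rw [← sub_eq_zero, ← h12]
    abel
  have hnorm : ‖(ContinuousLinearMap.adjoint P.C) (P.p (j+1+1))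
        - (ContinuousLinearMap.adjoint P.C) (P.p (j+1))‖
      ≤ (P.ℓh + P.ℓ₃) * ‖P.z (j+1+1) - P.z (j+1)‖ + P.ℓ₃ * ‖P.z (j+1) - P.z j‖ := by
    rw [hsub]
    have t1 := norm_add_le (-(P.h' (P.z (j+1+1)) - P.h' (P.z (j+1)))
        - (P.φ₃' (P.z (j+1+1)) - P.φ₃' (P.z (j+1)))) (P.φ₃' (P.z (j+1)) - P.φ₃' (P.z j))
    have t2 := norm_sub_le (-(P.h' (P.z (j+1+1)) - P.h' (P.z (j+1))))
        (P.φ₃' (P.z (j+1+1)) - P.φ₃' (P.z (j+1)))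
    rw [norm_neg] at t2
    have l1 := P.hlip_h (P.z (j+1+1)) (P.z (j+1))
    have l2 := P.hlip_φ₃ (P.z (j+1+1)) (P.z (j+1))
    have l3 := P.hlip_φ₃ (P.z (j+1)) (P.z j)
    calc ‖-(P.h' (P.z (j+1+1)) - P.h' (P.z (j+1)))
          - (P.φ₃' (P.z (j+1+1)) - P.φ₃' (P.z (j+1)))
          + (P.φ₃' (P.z (j+1)) - P.φ₃' (P.z j))‖ ≤ _ := t1
      _ ≤ _ := by linarith
  have hΔp : P.p (j+1+1) - P.p (j+1)
      = P.α • (P.A (P.x (j+1+1)) + P.B (P.y (j+1+1)) + P.C (P.z (j+1+1))) := by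
    rw [P.hp_upd (j+1)]
    exact add_sub_cancel_left _ _
  have hrank := P.hC_rank (P.p (j+1+1) - P.p (j+1))
  rw [map_sub] at hrank
  have hnn : (0:ℝ) ≤ (P.ℓh + P.ℓ₃) * ‖P.z (j+1+1) - P.z (j+1)‖ + P.ℓ₃ * ‖P.z (j+1) - P.z j‖ := by
    have := norm_nonneg ((ContinuousLinearMap.adjoint P.C) (P.p (j+1+1))
      - (ContinuousLinearMap.adjoint P.C) (P.p (j+1)))
    linarith
  have hsq : ‖(ContinuousLinearMap.adjoint P.C) (P.p (j+1+1))
        - (ContinuousLinearMap.adjoint P.C) (P.p (j+1))‖ ^ 2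
      ≤ 2 * (P.ℓh + P.ℓ₃) ^ 2 * ‖P.z (j+1+1) - P.z (j+1)‖ ^ 2
        + 2 * P.ℓ₃ ^ 2 * ‖P.z (j+1) - P.z j‖ ^ 2 := by
    have h1 : ‖(ContinuousLinearMap.adjoint P.C) (P.p (j+1+1))
          - (ContinuousLinearMap.adjoint P.C) (P.p (j+1))‖ ^ 2
        ≤ ((P.ℓh + P.ℓ₃) * ‖P.z (j+1+1) - P.z (j+1)‖ + P.ℓ₃ * ‖P.z (j+1) - P.z j‖) ^ 2 :=
      pow_le_pow_left₀ (norm_nonneg _) hnorm 2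
    nlinarith [sq_nonneg ((P.ℓh + P.ℓ₃) * ‖P.z (j+1+1) - P.z (j+1)‖ - P.ℓ₃ * ‖P.z (j+1) - P.z j‖)]
  have hΔpn : ‖P.p (j+1+1) - P.p (j+1)‖ ^ 2
      = P.α ^ 2 * ‖P.A (P.x (j+1+1)) + P.B (P.y (j+1+1)) + P.C (P.z (j+1+1))‖ ^ 2 := by
    rw [hΔp, norm_smul, Real.norm_eq_abs, mul_pow, sq_abs]
  have hfin : P.α * ‖P.A (P.x (j+1+1)) + P.B (P.y (j+1+1)) + P.C (P.z (j+1+1))‖ ^ 2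
      ≤ 2 * (P.ℓh + P.ℓ₃) ^ 2 / (P.α * P.σC) * ‖P.z (j+1+1) - P.z (j+1)‖ ^ 2
        + 2 * P.ℓ₃ ^ 2 / (P.α * P.σC) * ‖P.z (j+1) - P.z j‖ ^ 2 := by
    rw [div_mul_eq_mul_div, div_mul_eq_mul_div, ← add_div,
      le_div_iff₀ (mul_pos P.hα_pos P.hσC_pos)]
    rw [hΔpn] at hrank
    nlinarith [hrank, hsq]
  linarith [hEx, hEy, hEz, hpdiff, hfin]
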